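/- Domain-selection gap lower bound (cross-entropy form, Theorem 1 of the paper). Let X_j : Ω → 𝒳_j for j ∈ Fin D be a family of random variables into finite types, Y : Ω → Bool, and W : Ω → ∏_{j ∈ Fin D} 𝒳_j the joint random variable defined by (W ω) j = X_j ω. Let S ⊆ Fin D be nonempty and suppose Z : Ω → 𝒵 (𝒵 finite) satisfies: for every j ∈ S there is a function g_j : 𝒳_j → 𝒵 with Z ω = g_j (X_j ω) for all ω ∈ Ω. Suppose i ∈ Fin D satisfies the optimality assumption I(X_i ; Y) = max_{j ∈ Fin D} I(X_j ; Y). Then (⨅ over all h : 𝒵 → ℝ with 0 < h(z) < 1 for all z of ∑_ω P ω · ℓ_CE(h(Z ω), Y ω)) − (⨅ over all h' : (∏_{j} 𝒳_j) → ℝ with 0 < h'(w) < 1 for all w of ∑_ω P ω · ℓ_CE(h'(W ω), Y ω)) ≥ I(X_i ; Y) − min_{j ∈ S} I(X_j ; Y). -/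

import Mathlib

open Finset

/-- Joint probability `p_{X,Y}(x,y) = ∑_{ω : X ω = x ∧ Y ω = y} P ω`. -/
noncomputable def pJoint {Ω 𝒳 : Type*} [Fintype Ω] [DecidableEq 𝒳]
    (P : Ω → ℝ) (X : Ω → 𝒳) (Y : Ω → Bool) (x : 𝒳) (y : Bool) : ℝ :=
  ∑ ω ∈ Finset.univ.filter (fun ω => X ω = x ∧ Y ω = y), P ω

/-- Marginal probability `p_X(x) = ∑_{ω : X ω = x} P ω`. -/
noncomputable def pMarg {Ω 𝒳 : Type*} [Fintype Ω] [DecidableEq 𝒳]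
    (P : Ω → ℝ) (X : Ω → 𝒳) (x : 𝒳) : ℝ :=
  ∑ ω ∈ Finset.univ.filter (fun ω => X ω = x), P ω

/-- Conditional entropy `H(Y|X)`; terms with `p_{X,Y}(x,y) = 0` vanish since `0 · log _ = 0`. -/
noncomputable def condEnt {Ω 𝒳 : Type*} [Fintype Ω] [Fintype 𝒳] [DecidableEq 𝒳]
    (P : Ω → ℝ) (X : Ω → 𝒳) (Y : Ω → Bool) : ℝ :=
  -∑ x : 𝒳, ∑ y : Bool, pJoint P X Y x y * Real.log (pJoint P X Y x y / pMarg P X x)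

/-- Entropy `H(Y)` of a binary random variable; `0 · log 0 = 0` is automatic. -/
noncomputable def ent {Ω : Type*} [Fintype Ω] (P : Ω → ℝ) (Y : Ω → Bool) : ℝ :=
  -∑ y : Bool, pMarg P Y y * Real.log (pMarg P Y y)

/-- Mutual information `I(X;Y) = H(Y) − H(Y|X)`. -/
noncomputable def mutInfo {Ω 𝒳 : Type*} [Fintype Ω] [Fintype 𝒳] [DecidableEq 𝒳]
    (P : Ω → ℝ) (X : Ω → 𝒳) (Y : Ω → Bool) : ℝ :=
  ent P Y - condEnt P X Y

/-- Binary cross-entropy loss. -/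
noncomputable def ceLoss (q : ℝ) (y : Bool) : ℝ :=
  if y then -Real.log q else -Real.log (1 - q)

/-- Expected cross-entropy risk of predictor `f`. -/
noncomputable def risk {Ω 𝒳 : Type*} [Fintype Ω]
    (P : Ω → ℝ) (X : Ω → 𝒳) (Y : Ω → Bool) (f : 𝒳 → ℝ) : ℝ :=
  ∑ ω, P ω * ceLoss (f (X ω)) (Y ω)

section Aux

variable {Ω 𝒳 : Type*} [Fintype Ω] [Fintype 𝒳] [DecidableEq 𝒳]

lemma pJoint_nonneg (P : Ω → ℝ) (hP0 : ∀ ω, 0 ≤ P ω) (X : Ω → 𝒳) (Y : Ω → Bool) (x y) :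
    0 ≤ pJoint P X Y x y := Finset.sum_nonneg fun ω _ => hP0 ω

lemma pMarg_eq_add (P : Ω → ℝ) (X : Ω → 𝒳) (Y : Ω → Bool) (x : 𝒳) :
    pMarg P X x = pJoint P X Y x true + pJoint P X Y x false := by
  unfold pMarg pJoint
  rw [← Finset.sum_filter_add_sum_filter_not (Finset.univ.filter (fun ω => X ω = x))
    (fun ω => Y ω = true)]
  congr 1 <;> rw [Finset.filter_filter] <;>
    exact Finset.sum_congr
      (Finset.filter_congr (fun ω _ => by cases h : Y ω <;> simp [h, and_comm]))
      (fun _ _ => rfl)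

lemma sum_pMarg (P : Ω → ℝ) (X : Ω → 𝒳) : ∑ x, pMarg P X x = ∑ ω, P ω :=
  Finset.sum_fiberwise Finset.univ X P

lemma risk_eq (P : Ω → ℝ) (X : Ω → 𝒳) (Y : Ω → Bool) (f : 𝒳 → ℝ) :
    risk P X Y f = ∑ x, (pJoint P X Y x true * -(Real.log (f x)) +
      pJoint P X Y x false * -(Real.log (1 - f x))) := by
  unfold risk
  rw [← Finset.sum_fiberwise Finset.univ (fun ω => (X ω, Y ω))
    (fun ω => P ω * ceLoss (f (X ω)) (Y ω)), Fintype.sum_prod_type]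
  apply Finset.sum_congr rfl
  intro x _
  have h1 : ∀ y : Bool,
      (∑ ω ∈ Finset.univ.filter (fun ω => (X ω, Y ω) = (x, y)), P ω * ceLoss (f (X ω)) (Y ω))
        = pJoint P X Y x y * ceLoss (f x) y := by
    intro y
    unfold pJoint
    rw [Finset.sum_mul]
    refine Finset.sum_congr (Finset.filter_congr ?_) ?_
    · intro ω _; simp [Prod.ext_iff]
    · intro ω hω
      simp only [Finset.mem_filter] at hω
      rw [hω.2.1, hω.2.2]
  rw [Fintype.sum_bool, h1 true, h1 false]
  simp [ceLoss]

lemma condEnt_eq (P : Ω → ℝ) (X : Ω → 𝒳) (Y : Ω → Bool) :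
    condEnt P X Y = ∑ x, (pJoint P X Y x true * -(Real.log (pJoint P X Y x true / pMarg P X x)) +
      pJoint P X Y x false * -(Real.log (pJoint P X Y x false / pMarg P X x))) := by
  unfold condEnt
  rw [← Finset.sum_neg_distrib]
  apply Finset.sum_congr rfl
  intro x _
  rw [Fintype.sum_bool]
  ring

/-- Auxiliary log inequality. -/
lemma log_aux {a c q : ℝ} (ha : 0 ≤ a) (hac : a ≤ c) (hq : 0 < q) :
    a - c * q ≤ a * Real.log (a / c) - a * Real.log q := by
  rcases eq_or_lt_of_le ha with h0 | h0
  · have hc : 0 ≤ c := le_trans ha hac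
    simp only [← h0, zero_mul, sub_zero, zero_sub, neg_nonpos]
    positivity
  · have hc : 0 < c := lt_of_lt_of_le h0 hac
    have h1 : Real.log (c * q / a) ≤ c * q / a - 1 :=
      Real.log_le_sub_one_of_pos (by positivity)
    have h2 : a * Real.log (a / c) - a * Real.log q = -(a * Real.log (c * q / a)) := by
      rw [Real.log_div h0.ne' hc.ne', Real.log_div (by positivity) h0.ne',
        Real.log_mul hc.ne' hq.ne']
      ring
    rw [h2]
    have h3 : a * Real.log (c * q / a) ≤ a * (c * q / a - 1) :=
      mul_le_mul_of_nonneg_left h1 ha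
    have h4 : a * (c * q / a - 1) = c * q - a := by field_simp
    linarith

/-- Pointwise Gibbs inequality. -/
lemma gibbs_point {a b q : ℝ} (ha : 0 ≤ a) (hb : 0 ≤ b) (hq0 : 0 < q) (hq1 : q < 1) :
    a * -(Real.log (a / (a + b))) + b * -(Real.log (b / (a + b))) ≤
      a * -(Real.log q) + b * -(Real.log (1 - q)) := by
  have h1 := log_aux ha (le_add_of_nonneg_right hb) hq0
  have h2 := log_aux hb (by linarith : b ≤ a + b) (by linarith : (0:ℝ) < 1 - q)
  have h3 : (a + b) * q + (a + b) * (1 - q) = a + b := by ring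
  simp only [mul_neg] at *
  linarith

/-- Gibbs: the conditional entropy lower-bounds the cross-entropy risk. -/
lemma condEnt_le_risk (P : Ω → ℝ) (hP0 : ∀ ω, 0 ≤ P ω) (X : Ω → 𝒳) (Y : Ω → Bool)
    (f : 𝒳 → ℝ) (hf : ∀ x, 0 < f x ∧ f x < 1) :
    condEnt P X Y ≤ risk P X Y f := by
  rw [risk_eq, condEnt_eq]
  apply Finset.sum_le_sum
  intro x _
  rw [pMarg_eq_add P X Y x]
  exact gibbs_point (pJoint_nonneg P hP0 X Y x true) (pJoint_nonneg P hP0 X Y x false)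
    (hf x).1 (hf x).2

/-- The clipped Bayes predictor. -/
noncomputable def clipPred (P : Ω → ℝ) (X : Ω → 𝒳) (Y : Ω → Bool) (δ : ℝ) (x : 𝒳) : ℝ :=
  (1 - δ) * (pJoint P X Y x true / pMarg P X x) + δ / 2

lemma clipPred_mem (P : Ω → ℝ) (hP0 : ∀ ω, 0 ≤ P ω) (X : Ω → 𝒳) (Y : Ω → Bool)
    {δ : ℝ} (hδ0 : 0 < δ) (hδ1 : δ < 1) (x : 𝒳) :
    0 < clipPred P X Y δ x ∧ clipPred P X Y δ x < 1 := by
  have ha := pJoint_nonneg P hP0 X Y x true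
  have hb := pJoint_nonneg P hP0 X Y x false
  have hc : pMarg P X x = pJoint P X Y x true + pJoint P X Y x false := pMarg_eq_add P X Y x
  have hp0 : 0 ≤ pJoint P X Y x true / pMarg P X x := by
    apply div_nonneg ha; rw [hc]; linarith
  have hp1 : pJoint P X Y x true / pMarg P X x ≤ 1 := by
    rcases eq_or_lt_of_le (by rw [hc]; linarith : (0:ℝ) ≤ pMarg P X x) with h | h
    · rw [← h, div_zero]; norm_num
    · rw [div_le_one h, hc]; linarith
  constructor
  · unfold clipPred; nlinarith
  · unfold clipPred; nlinarith

/-- Risk of the clipped Bayes predictor. -/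
lemma risk_clipPred_le (P : Ω → ℝ) (hP0 : ∀ ω, 0 ≤ P ω) (hP1 : ∑ ω, P ω = 1)
    (X : Ω → 𝒳) (Y : Ω → Bool) {δ : ℝ} (hδ0 : 0 < δ) (hδ1 : δ < 1) :
    risk P X Y (clipPred P X Y δ) ≤ condEnt P X Y - Real.log (1 - δ) := by
  rw [risk_eq, condEnt_eq]
  have key : ∀ x, (pJoint P X Y x true * -(Real.log (clipPred P X Y δ x)) +
      pJoint P X Y x false * -(Real.log (1 - clipPred P X Y δ x))) ≤
      (pJoint P X Y x true * -(Real.log (pJoint P X Y x true / pMarg P X x)) +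
        pJoint P X Y x false * -(Real.log (pJoint P X Y x false / pMarg P X x)))
        - Real.log (1 - δ) * pMarg P X x := by
    intro x
    set a := pJoint P X Y x true with ha_def
    set b := pJoint P X Y x false with hb_def
    have ha : 0 ≤ a := pJoint_nonneg P hP0 X Y x true
    have hb : 0 ≤ b := pJoint_nonneg P hP0 X Y x false
    have hc : pMarg P X x = a + b := pMarg_eq_add P X Y x
    rw [hc]
    set c := a + b with hc_def
    have hcn : 0 ≤ c := by simp [hc_def]; linarith
    have h1δ : 0 < 1 - δ := by linarith
    -- piece for `a`
    have piece1 : a * -(Real.log (clipPred P X Y δ x)) ≤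
        a * -(Real.log (a / c)) - Real.log (1 - δ) * a := by
      rcases eq_or_lt_of_le ha with h0 | h0
      · simp [← h0]
      · have hcpos : 0 < c := lt_of_lt_of_le h0 (by simp [hc_def]; linarith)
        have hp : 0 < a / c := div_pos h0 hcpos
        have hle : (1 - δ) * (a / c) ≤ clipPred P X Y δ x := by
          unfold clipPred; rw [← hc]; rw [hc]; nlinarith
        have hlog : Real.log ((1 - δ) * (a / c)) ≤ Real.log (clipPred P X Y δ x) :=
          Real.log_le_log (by positivity) hle
        rw [Real.log_mul h1δ.ne' hp.ne'] at hlog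
        nlinarith
    -- piece for `b`
    have piece2 : b * -(Real.log (1 - clipPred P X Y δ x)) ≤
        b * -(Real.log (b / c)) - Real.log (1 - δ) * b := by
      rcases eq_or_lt_of_le hb with h0 | h0
      · simp [← h0]
      · have hcpos : 0 < c := lt_of_lt_of_le h0 (by simp [hc_def]; linarith)
        have hp : 0 < b / c := div_pos h0 hcpos
        have hab : a / c + b / c = 1 := by field_simp; linarith [hc_def]
        have hle : (1 - δ) * (b / c) ≤ 1 - clipPred P X Y δ x := by
          unfold clipPred; rw [← hc]; rw [hc]; nlinarith
        have hlog : Real.log ((1 - δ) * (b / c)) ≤ Real.log (1 - clipPred P X Y δ x) :=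
          Real.log_le_log (by positivity) hle
        rw [Real.log_mul h1δ.ne' hp.ne'] at hlog
        nlinarith
    nlinarith
  calc ∑ x, (pJoint P X Y x true * -(Real.log (clipPred P X Y δ x)) +
      pJoint P X Y x false * -(Real.log (1 - clipPred P X Y δ x)))
      ≤ ∑ x, ((pJoint P X Y x true * -(Real.log (pJoint P X Y x true / pMarg P X x)) +
        pJoint P X Y x false * -(Real.log (pJoint P X Y x false / pMarg P X x)))
        - Real.log (1 - δ) * pMarg P X x) := Finset.sum_le_sum fun x _ => key x
    _ = (∑ x, (pJoint P X Y x true * -(Real.log (pJoint P X Y x true / pMarg P X x)) +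
        pJoint P X Y x false * -(Real.log (pJoint P X Y x false / pMarg P X x))))
        - Real.log (1 - δ) * ∑ x, pMarg P X x := by
        rw [Finset.sum_sub_distrib, Finset.mul_sum]
    _ = _ := by rw [sum_pMarg, hP1, mul_one]

end Aux

/-- domain-selection gap lower bound (cross-entropy form,
Theorem 1 of the paper). With `W` the joint of the family, `Z` a deterministic
function of `X j` for each `j ∈ S`, and `i` the domain maximizing
`I(X j ; Y)` (optimality assumption), the gap between the best achievable
cross-entropy risks satisfies
`inf_h R(h ∘ Z) − inf_h' R(h' ∘ W) ≥ I(X i ; Y) − min_{j ∈ S} I(X j ; Y)`. -/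
theorem domain_selection_gap_ce {Ω 𝒵 : Type*} {D : ℕ} {𝒳 : Fin D → Type*}
    [Fintype Ω] [Nonempty Ω] [∀ j, Fintype (𝒳 j)] [∀ j, DecidableEq (𝒳 j)]
    [Fintype 𝒵] [DecidableEq 𝒵]
    (P : Ω → ℝ) (hP0 : ∀ ω, 0 ≤ P ω) (hP1 : ∑ ω, P ω = 1)
    (X : ∀ j : Fin D, Ω → 𝒳 j) (Y : Ω → Bool)
    (W : Ω → ∀ j : Fin D, 𝒳 j) (hW : ∀ ω j, W ω j = X j ω)
    (S : Finset (Fin D)) (hS : S.Nonempty)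
    (Z : Ω → 𝒵) (hZ : ∀ j ∈ S, ∃ g : 𝒳 j → 𝒵, ∀ ω, Z ω = g (X j ω))
    (i : Fin D)
    (hopt : mutInfo P (X i) Y =
      Finset.univ.sup' ⟨i, Finset.mem_univ i⟩ (fun j => mutInfo P (X j) Y)) :
    (⨅ h : {h : 𝒵 → ℝ // ∀ z, 0 < h z ∧ h z < 1}, risk P Z Y h.1) -
      (⨅ h' : {h' : (∀ j : Fin D, 𝒳 j) → ℝ // ∀ w, 0 < h' w ∧ h' w < 1},
        risk P W Y h'.1) ≥
      mutInfo P (X i) Y - S.inf' hS (fun j => mutInfo P (X j) Y) := by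
  -- pick the minimizer j* of mutual information over S
  obtain ⟨j, hjS, hj⟩ := Finset.exists_mem_eq_inf' hS (fun j => mutInfo P (X j) Y)
  obtain ⟨g, hg⟩ := hZ j hjS
  have hNZ : Nonempty {h : 𝒵 → ℝ // ∀ z, 0 < h z ∧ h z < 1} :=
    ⟨⟨fun _ => 1 / 2, fun _ => by norm_num⟩⟩
  have hNW : Nonempty {h' : (∀ j : Fin D, 𝒳 j) → ℝ // ∀ w, 0 < h' w ∧ h' w < 1} :=
    ⟨⟨fun _ => 1 / 2, fun _ => by norm_num⟩⟩
  -- lower bound on the Z-infimum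
  have hZlb : condEnt P (X j) Y ≤
      ⨅ h : {h : 𝒵 → ℝ // ∀ z, 0 < h z ∧ h z < 1}, risk P Z Y h.1 := by
    apply le_ciInf
    intro h
    have : risk P Z Y h.1 = risk P (X j) Y (fun x => h.1 (g x)) := by
      unfold risk
      exact Finset.sum_congr rfl fun ω _ => by rw [hg ω]
    rw [this]
    exact condEnt_le_risk P hP0 (X j) Y _ (fun x => h.2 (g x))
  -- upper bound on the W-infimum
  have hWbdd : BddBelow (Set.range
      (fun h' : {h' : (∀ j : Fin D, 𝒳 j) → ℝ // ∀ w, 0 < h' w ∧ h' w < 1} =>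
        risk P W Y h'.1)) := by
    refine ⟨condEnt P W Y, ?_⟩
    rintro r ⟨h', rfl⟩
    exact condEnt_le_risk P hP0 W Y h'.1 h'.2
  have hWub : (⨅ h' : {h' : (∀ j : Fin D, 𝒳 j) → ℝ // ∀ w, 0 < h' w ∧ h' w < 1},
      risk P W Y h'.1) ≤ condEnt P (X i) Y := by
    apply le_of_forall_pos_le_add
    intro ε hε
    set δ : ℝ := 1 - Real.exp (-ε) with hδ_def
    have hδ0 : 0 < δ := by
      have : Real.exp (-ε) < 1 := Real.exp_lt_one_iff.mpr (by linarith)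
      simp [hδ_def]; linarith
    have hδ1 : δ < 1 := by
      have := Real.exp_pos (-ε)
      simp [hδ_def]; linarith
    have hlog : Real.log (1 - δ) = -ε := by
      simp [hδ_def, Real.log_exp]
    set f : (∀ j : Fin D, 𝒳 j) → ℝ := fun w => clipPred P (X i) Y δ (w i) with hf_def
    have hfmem : ∀ w, 0 < f w ∧ f w < 1 := fun w =>
      clipPred_mem P hP0 (X i) Y hδ0 hδ1 (w i)
    have hriskeq : risk P W Y f = risk P (X i) Y (clipPred P (X i) Y δ) := by
      unfold risk
      exact Finset.sum_congr rfl fun ω _ => by simp [hf_def, hW ω i]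
    calc (⨅ h' : {h' : (∀ j : Fin D, 𝒳 j) → ℝ // ∀ w, 0 < h' w ∧ h' w < 1},
        risk P W Y h'.1) ≤ risk P W Y f := ciInf_le hWbdd ⟨f, hfmem⟩
      _ = risk P (X i) Y (clipPred P (X i) Y δ) := hriskeq
      _ ≤ condEnt P (X i) Y - Real.log (1 - δ) :=
          risk_clipPred_le P hP0 hP1 (X i) Y hδ0 hδ1
      _ = condEnt P (X i) Y + ε := by rw [hlog]; ring
  rw [hj]
  unfold mutInfo
  linarith
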